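/- arXiv:1706.03394 — 3 statements merged into one kernel-verified Lean document; each statement's English description precedes it below -/
import Mathlib

section
/- Let λ > 0, ϑ ∈ (0,1), ν ∈ (0,1] and t > 0. Define v(s) = 2λ² s^{2ν}/Γ(2ν+1) − λ² s^{2ν}/Γ(ν+1)² + λ s^ν/Γ(ν+1). Then the function F(t) = (1/Γ(1−ϑ)) · ∫₀ᵗ (t−s)^{−ϑ} v(s) ds has derivative at t equal to λ t^{ν−ϑ}/Γ(1+ν−ϑ) + (λ²/Γ(1+2ν−ϑ)) · (2 − Γ(1+2ν)/Γ(ν+1)²) · t^{2ν−ϑ}. -/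
open Real MeasureTheory intervalIntegral

lemma betaReal {a b : ℝ} (ha : 0 < a) (hb : 0 < b) :
    ∫ x in (0:ℝ)..1, x ^ (a - 1) * (1 - x) ^ (b - 1)
      = Real.Gamma a * Real.Gamma b / Real.Gamma (a + b) := by
  have hab : 0 < a + b := by linarith
  have hG : Real.Gamma (a + b) ≠ 0 := (Real.Gamma_pos_of_pos hab).ne'
  have hc := Complex.Gamma_mul_Gamma_eq_betaIntegral
      (s := (a : ℂ)) (t := (b : ℂ)) (by simpa using ha) (by simpa using hb)
  have key : Complex.betaIntegral a b
      = ((∫ x in (0:ℝ)..1, x ^ (a - 1) * (1 - x) ^ (b - 1) : ℝ) : ℂ) := by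
    rw [Complex.betaIntegral, ← intervalIntegral.integral_ofReal]
    refine intervalIntegral.integral_congr fun x hx => ?_
    rw [Set.uIcc_of_le (by norm_num : (0:ℝ) ≤ 1)] at hx
    obtain ⟨hx0, hx1⟩ := hx
    rw [show ((a:ℂ) - 1) = ((a - 1 : ℝ) : ℂ) by push_cast; ring,
       show ((b:ℂ) - 1) = ((b - 1 : ℝ) : ℂ) by push_cast; ring,
       show ((1:ℂ) - (x:ℂ)) = ((1 - x : ℝ) : ℂ) by push_cast; ring,
       ← Complex.ofReal_cpow hx0, ← Complex.ofReal_cpow (by linarith : (0:ℝ) ≤ 1 - x),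
       ← Complex.ofReal_mul]
  rw [key, ← Complex.ofReal_add, Complex.Gamma_ofReal, Complex.Gamma_ofReal,
    Complex.Gamma_ofReal, ← Complex.ofReal_mul, ← Complex.ofReal_mul] at hc
  have h2 := Complex.ofReal_injective hc
  field_simp
  linarith [h2]

lemma intInt {α ϑ : ℝ} (hα : 0 ≤ α) (hϑ : ϑ < 1) (c : ℝ) :
    IntervalIntegrable (fun s : ℝ => (c - s) ^ (-ϑ) * s ^ α) volume 0 c := by
  have h1 : IntervalIntegrable (fun s : ℝ => (c - s) ^ (-ϑ)) volume 0 c := by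
    have h0 := (intervalIntegral.intervalIntegrable_rpow'
      (a := 0) (b := c) (by linarith : (-1:ℝ) < -ϑ)).comp_sub_left c
    simpa using h0.symm
  exact h1.mul_continuousOn (Real.continuous_rpow_const hα).continuousOn

lemma powInt {α ϑ : ℝ} (hα : 0 < α) (hϑ1 : ϑ < 1) {τ : ℝ} (hτ : 0 < τ) :
    ∫ s in (0:ℝ)..τ, (τ - s) ^ (-ϑ) * s ^ α
      = Real.Gamma (α + 1) * Real.Gamma (1 - ϑ) / Real.Gamma (α + 2 - ϑ)
        * τ ^ (α + 1 - ϑ) := by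
  have hsub := intervalIntegral.smul_integral_comp_mul_right
    (a := 0) (b := 1) (fun s : ℝ => (τ - s) ^ (-ϑ) * s ^ α) τ
  simp only [smul_eq_mul, zero_mul, one_mul] at hsub
  rw [← hsub]
  have hcongr : ∫ x in (0:ℝ)..1, (τ - x * τ) ^ (-ϑ) * (x * τ) ^ α
      = ∫ x in (0:ℝ)..1, (τ ^ (-ϑ) * τ ^ α) * (x ^ ((α + 1) - 1) * (1 - x) ^ ((1 - ϑ) - 1)) := by
    refine intervalIntegral.integral_congr fun x hx => ?_
    rw [Set.uIcc_of_le (by norm_num : (0:ℝ) ≤ 1)] at hx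
    obtain ⟨hx0, hx1⟩ := hx
    have e1 : τ - x * τ = τ * (1 - x) := by ring
    have e2 : x * τ = τ * x := by ring
    rw [e1, e2, Real.mul_rpow hτ.le (by linarith), Real.mul_rpow hτ.le hx0]
    have e3 : (α + 1) - 1 = α := by ring
    have e4 : (1 - ϑ) - 1 = -ϑ := by ring
    rw [e3, e4]; ring
  rw [hcongr, intervalIntegral.integral_const_mul,
    betaReal (by linarith : (0:ℝ) < α + 1) (by linarith : (0:ℝ) < 1 - ϑ)]
  have e5 : (α + 1) + (1 - ϑ) = α + 2 - ϑ := by ring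
  rw [e5]
  rw [show α + 1 - ϑ = -ϑ + α + 1 by ring, Real.rpow_add hτ, Real.rpow_add hτ, Real.rpow_one]
  ring

/-- Lemma 3.5: the Riemann–Liouville fractional integral of order `1−ϑ` of the
variance `v(s) = 2λ²s^(2ν)/Γ(2ν+1) − λ²s^(2ν)/Γ(ν+1)² + λs^ν/Γ(ν+1)` of the
fractional Poisson process has derivative
`λ t^(ν−ϑ)/Γ(1+ν−ϑ) + (λ²/Γ(1+2ν−ϑ))(2 − Γ(1+2ν)/Γ(ν+1)²) t^(2ν−ϑ)` at `t > 0`. -/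
theorem stmt_5 (lam ϑ ν : ℝ) (hlam : 0 < lam) (hϑ : ϑ ∈ Set.Ioo (0 : ℝ) 1)
    (hν : ν ∈ Set.Ioc (0 : ℝ) 1) (t : ℝ) (ht : 0 < t) :
    HasDerivAt
      (fun τ : ℝ => (1 / Real.Gamma (1 - ϑ)) *
        ∫ s in (0 : ℝ)..τ, (τ - s) ^ (-ϑ) *
          (2 * lam ^ 2 * s ^ (2 * ν) / Real.Gamma (2 * ν + 1)
            - lam ^ 2 * s ^ (2 * ν) / Real.Gamma (ν + 1) ^ 2
            + lam * s ^ ν / Real.Gamma (ν + 1)))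
      (lam * t ^ (ν - ϑ) / Real.Gamma (1 + ν - ϑ)
        + lam ^ 2 / Real.Gamma (1 + 2 * ν - ϑ)
          * (2 - Real.Gamma (1 + 2 * ν) / Real.Gamma (ν + 1) ^ 2) * t ^ (2 * ν - ϑ)) t := by
  obtain ⟨hϑ0, hϑ1⟩ := hϑ
  obtain ⟨hν0, hν1⟩ := hν
  set A : ℝ := 2 * lam ^ 2 / Real.Gamma (2 * ν + 1) - lam ^ 2 / Real.Gamma (ν + 1) ^ 2 with hA
  set C : ℝ := lam / Real.Gamma (ν + 1) with hC
  set K2 : ℝ := Real.Gamma (2 * ν + 1) * Real.Gamma (1 - ϑ) / Real.Gamma (2 * ν + 2 - ϑ) with hK2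
  set K1 : ℝ := Real.Gamma (ν + 1) * Real.Gamma (1 - ϑ) / Real.Gamma (ν + 2 - ϑ) with hK1
  -- closed form on positive reals
  have hclosed : ∀ τ : ℝ, 0 < τ →
      (1 / Real.Gamma (1 - ϑ)) *
        ∫ s in (0 : ℝ)..τ, (τ - s) ^ (-ϑ) *
          (2 * lam ^ 2 * s ^ (2 * ν) / Real.Gamma (2 * ν + 1)
            - lam ^ 2 * s ^ (2 * ν) / Real.Gamma (ν + 1) ^ 2
            + lam * s ^ ν / Real.Gamma (ν + 1))
      = (1 / Real.Gamma (1 - ϑ)) *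
          (A * (K2 * τ ^ (2 * ν + 1 - ϑ)) + C * (K1 * τ ^ (ν + 1 - ϑ))) := by
    intro τ hτ
    have hsplit : ∫ s in (0 : ℝ)..τ, (τ - s) ^ (-ϑ) *
          (2 * lam ^ 2 * s ^ (2 * ν) / Real.Gamma (2 * ν + 1)
            - lam ^ 2 * s ^ (2 * ν) / Real.Gamma (ν + 1) ^ 2
            + lam * s ^ ν / Real.Gamma (ν + 1))
        = A * (∫ s in (0 : ℝ)..τ, (τ - s) ^ (-ϑ) * s ^ (2 * ν))
          + C * (∫ s in (0 : ℝ)..τ, (τ - s) ^ (-ϑ) * s ^ ν) := by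
      rw [← intervalIntegral.integral_const_mul, ← intervalIntegral.integral_const_mul,
        ← intervalIntegral.integral_add
          ((intInt (by linarith : (0:ℝ) ≤ 2 * ν) hϑ1 τ).const_mul A)
          ((intInt hν0.le hϑ1 τ).const_mul C)]
      refine intervalIntegral.integral_congr fun s _ => ?_
      simp only [hA, hC]
      ring
    rw [hsplit, powInt (by linarith) hϑ1 hτ, powInt hν0 hϑ1 hτ]
  -- derivative of the closed form
  have hd2 : HasDerivAt (fun τ : ℝ => τ ^ (2 * ν + 1 - ϑ))
      ((2 * ν + 1 - ϑ) * t ^ (2 * ν - ϑ)) t := by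
    have h := Real.hasDerivAt_rpow_const (x := t) (p := 2 * ν + 1 - ϑ) (Or.inl ht.ne')
    rwa [show 2 * ν + 1 - ϑ - 1 = 2 * ν - ϑ from by ring] at h
  have hd1 : HasDerivAt (fun τ : ℝ => τ ^ (ν + 1 - ϑ))
      ((ν + 1 - ϑ) * t ^ (ν - ϑ)) t := by
    have h := Real.hasDerivAt_rpow_const (x := t) (p := ν + 1 - ϑ) (Or.inl ht.ne')
    rwa [show ν + 1 - ϑ - 1 = ν - ϑ from by ring] at h
  have hg : HasDerivAt (fun τ : ℝ => (1 / Real.Gamma (1 - ϑ)) *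
        (A * (K2 * τ ^ (2 * ν + 1 - ϑ)) + C * (K1 * τ ^ (ν + 1 - ϑ))))
      ((1 / Real.Gamma (1 - ϑ)) *
        (A * (K2 * ((2 * ν + 1 - ϑ) * t ^ (2 * ν - ϑ)))
          + C * (K1 * ((ν + 1 - ϑ) * t ^ (ν - ϑ))))) t :=
    (((hd2.const_mul K2).const_mul A).add ((hd1.const_mul K1).const_mul C)).const_mul _
  have heq : (fun τ : ℝ => (1 / Real.Gamma (1 - ϑ)) *
        ∫ s in (0 : ℝ)..τ, (τ - s) ^ (-ϑ) *
          (2 * lam ^ 2 * s ^ (2 * ν) / Real.Gamma (2 * ν + 1)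
            - lam ^ 2 * s ^ (2 * ν) / Real.Gamma (ν + 1) ^ 2
            + lam * s ^ ν / Real.Gamma (ν + 1)))
      =ᶠ[nhds t] (fun τ : ℝ => (1 / Real.Gamma (1 - ϑ)) *
        (A * (K2 * τ ^ (2 * ν + 1 - ϑ)) + C * (K1 * τ ^ (ν + 1 - ϑ)))) := by
    filter_upwards [eventually_gt_nhds ht] with τ hτ
    exact hclosed τ hτ
  have hfinal := hg.congr_of_eventuallyEq heq
  convert hfinal using 1
  case e'_4 => rfl
  case e'_5 => rfl
  -- algebra: identify the derivative values
  have hG1 : Real.Gamma (1 - ϑ) ≠ 0 := (Real.Gamma_pos_of_pos (by linarith)).ne'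
  have hGν1 : Real.Gamma (ν + 1) ≠ 0 := (Real.Gamma_pos_of_pos (by linarith)).ne'
  have hG2ν1 : Real.Gamma (2 * ν + 1) ≠ 0 := (Real.Gamma_pos_of_pos (by linarith)).ne'
  have hr2 : Real.Gamma (2 * ν + 2 - ϑ) = (2 * ν + 1 - ϑ) * Real.Gamma (2 * ν + 1 - ϑ) := by
    rw [show 2 * ν + 2 - ϑ = (2 * ν + 1 - ϑ) + 1 by ring,
      Real.Gamma_add_one (by linarith : (0:ℝ) < 2 * ν + 1 - ϑ).ne']
  have hr1 : Real.Gamma (ν + 2 - ϑ) = (ν + 1 - ϑ) * Real.Gamma (ν + 1 - ϑ) := by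
    rw [show ν + 2 - ϑ = (ν + 1 - ϑ) + 1 by ring,
      Real.Gamma_add_one (by linarith : (0:ℝ) < ν + 1 - ϑ).ne']
  have hGa : Real.Gamma (2 * ν + 1 - ϑ) ≠ 0 := (Real.Gamma_pos_of_pos (by linarith)).ne'
  have hGb : Real.Gamma (ν + 1 - ϑ) ≠ 0 := (Real.Gamma_pos_of_pos (by linarith)).ne'
  have ha2 : (2 * ν + 1 - ϑ) ≠ 0 := by intro h; linarith [h]
  have ha1 : (ν + 1 - ϑ) ≠ 0 := by intro h; linarith [h]
  rw [show (1 + 2 * ν - ϑ) = 2 * ν + 1 - ϑ by ring, show (1 + ν - ϑ) = ν + 1 - ϑ by ring,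
    show (1 + 2 * ν) = 2 * ν + 1 by ring]
  simp only [hA, hC, hK2, hK1, hr2, hr1]
  generalize Real.Gamma (2 * ν + 1 - ϑ) = g2 at hGa ⊢
  generalize Real.Gamma (ν + 1 - ϑ) = g1 at hGb ⊢
  generalize (2 * ν + 1 - ϑ) = a2 at ha2 ⊢
  generalize (ν + 1 - ϑ) = a1 at ha1 ⊢
  field_simp
  ring
end

section
/- Let ϑ ∈ (0,1), ν ∈ (0,1], a > 0, b > 0 and t > 0. Set q = 1/Γ(1+ν) and D = ν q² B(ν, 1+ν), where B denotes the Euler Beta function. Define v(s) = q (s/b)^{aν} (1 − q (s/b)^{aν}) + 2D (s/b)^{2aν}. Then the function F(t) = (1/Γ(1−ϑ)) · ∫₀ᵗ (t−s)^{−ϑ} v(s) ds has derivative at t equal to (q b^{−aν} Γ(1+aν)/Γ(1−ϑ+aν)) · t^{aν−ϑ} + (2D − q²) b^{−2aν} (Γ(1+2aν)/Γ(1−ϑ+2aν)) · t^{2aν−ϑ}. -/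
open Real MeasureTheory intervalIntegral

lemma beta_intble {p r : ℝ} (hp : 0 < p) (hr : 0 < r) :
    IntervalIntegrable (fun x : ℝ => x ^ (p - 1) * (1 - x) ^ (r - 1)) volume 0 1 := by
  have h := Complex.betaIntegral_convergent (u := (p : ℂ)) (v := (r : ℂ)) (by simpa) (by simpa)
  rw [intervalIntegrable_iff] at h ⊢
  refine MeasureTheory.IntegrableOn.congr_fun h.re ?_ measurableSet_uIoc
  intro x hx
  rw [Set.uIoc_of_le (by norm_num : (0:ℝ) ≤ 1)] at hx
  have hx0 : (0:ℝ) ≤ x := hx.1.le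
  have hx1 : (0:ℝ) ≤ 1 - x := by linarith [hx.2]
  simp only
  rw [show ((p:ℂ) - 1) = ((p - 1 : ℝ) : ℂ) by push_cast; ring,
    show ((r:ℂ) - 1) = ((r - 1 : ℝ) : ℂ) by push_cast; ring,
    show (1 - (x:ℂ)) = ((1 - x : ℝ) : ℂ) by push_cast; ring,
    ← Complex.ofReal_cpow hx0, ← Complex.ofReal_cpow hx1, ← Complex.ofReal_mul]
  simp

lemma beta_val {p r : ℝ} (hp : 0 < p) (hr : 0 < r) :
    ∫ x in (0:ℝ)..1, x ^ (p - 1) * (1 - x) ^ (r - 1)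
      = Real.Gamma p * Real.Gamma r / Real.Gamma (p + r) := by
  have key := Complex.Gamma_mul_Gamma_eq_betaIntegral (s := (p : ℂ)) (t := (r : ℂ))
    (by simpa) (by simpa)
  have hcoe : ((∫ x in (0:ℝ)..1, x ^ (p - 1) * (1 - x) ^ (r - 1) : ℝ) : ℂ)
      = Complex.betaIntegral p r := by
    rw [Complex.betaIntegral, ← intervalIntegral.integral_ofReal]
    apply intervalIntegral.integral_congr
    intro x hx
    rw [Set.uIcc_of_le (by norm_num : (0:ℝ) ≤ 1)] at hx
    simp only
    rw [show ((p:ℂ) - 1) = ((p - 1 : ℝ) : ℂ) by push_cast; ring,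
      show ((r:ℂ) - 1) = ((r - 1 : ℝ) : ℂ) by push_cast; ring,
      show (1 - (x:ℂ)) = ((1 - x : ℝ) : ℂ) by push_cast; ring,
      ← Complex.ofReal_cpow hx.1, ← Complex.ofReal_cpow (by linarith [hx.2]),
      ← Complex.ofReal_mul]
  have hne : Real.Gamma (p + r) ≠ 0 := (Real.Gamma_pos_of_pos (by linarith)).ne'
  have : Real.Gamma p * Real.Gamma r
      = Real.Gamma (p + r) * ∫ x in (0:ℝ)..1, x ^ (p - 1) * (1 - x) ^ (r - 1) := by
    rw [show ((p:ℂ) + r) = ((p + r : ℝ) : ℂ) by push_cast; ring] at key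
    rw [Complex.Gamma_ofReal, Complex.Gamma_ofReal, Complex.Gamma_ofReal, ← hcoe] at key
    exact_mod_cast key
  rw [this]
  field_simp

lemma scale_eq {ϑ p τ s : ℝ} (hτ : 0 < τ) (hs0 : 0 < s) (hsτ : s ≤ τ) :
    τ ^ (p - ϑ) * ((τ⁻¹ * s) ^ ((p + 1) - 1) * (1 - τ⁻¹ * s) ^ ((1 - ϑ) - 1))
      = (τ - s) ^ (-ϑ) * s ^ p := by
  rw [show (p + 1) - 1 = p by ring, show (1 - ϑ) - 1 = -ϑ by ring,
    show (1 - τ⁻¹ * s) = (τ - s) / τ by field_simp,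
    inv_mul_eq_div, Real.div_rpow hs0.le hτ.le, Real.div_rpow (by linarith) hτ.le,
    Real.rpow_sub hτ, Real.rpow_neg hτ.le, Real.rpow_neg (by linarith : (0:ℝ) ≤ τ - s)]
  have h1 : τ ^ p ≠ 0 := (Real.rpow_pos_of_pos hτ p).ne'
  have h2 : τ ^ ϑ ≠ 0 := (Real.rpow_pos_of_pos hτ ϑ).ne'
  field_simp

lemma key_intble {ϑ p τ : ℝ} (hϑ1 : ϑ < 1) (hp : 0 < p) (hτ : 0 < τ) :
    IntervalIntegrable (fun s : ℝ => (τ - s) ^ (-ϑ) * s ^ p) MeasureTheory.volume 0 τ := by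
  have hg := beta_intble (p := p + 1) (r := 1 - ϑ) (by linarith) (by linarith)
  have h2 := (hg.comp_mul_left (c := τ⁻¹)).const_mul (τ ^ (p - ϑ))
  rw [zero_div, one_div, inv_inv] at h2
  refine h2.congr ?_
  intro s hs
  rw [Set.uIoc_of_le hτ.le] at hs
  exact scale_eq hτ hs.1 hs.2

lemma key_val {ϑ p τ : ℝ} (hϑ0 : 0 < ϑ) (hϑ1 : ϑ < 1) (hp : 0 < p) (hτ : 0 < τ) :
    ∫ s in (0:ℝ)..τ, (τ - s) ^ (-ϑ) * s ^ p
      = (Real.Gamma (p + 1) * Real.Gamma (1 - ϑ) / Real.Gamma (p + 1 + (1 - ϑ)))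
        * τ ^ (p + 1 - ϑ) := by
  have step1 : ∫ s in (0:ℝ)..τ, (τ - s) ^ (-ϑ) * s ^ p
      = ∫ s in (0:ℝ)..τ, τ ^ (p - ϑ) *
          ((τ⁻¹ * s) ^ ((p + 1) - 1) * (1 - τ⁻¹ * s) ^ ((1 - ϑ) - 1)) := by
    apply intervalIntegral.integral_congr
    intro s hs
    rw [Set.uIcc_of_le hτ.le] at hs
    rcases eq_or_lt_of_le hs.1 with h0 | h0
    · rw [← h0]
      norm_num [Real.zero_rpow hp.ne', add_sub_cancel_right]
    · exact (scale_eq hτ h0 hs.2).symm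
  rw [step1, intervalIntegral.integral_const_mul]
  have step2 := intervalIntegral.smul_integral_comp_mul_left
    (f := fun x : ℝ => x ^ ((p + 1) - 1) * (1 - x) ^ ((1 - ϑ) - 1)) (a := (0:ℝ)) (b := τ) τ⁻¹
  rw [mul_zero, inv_mul_cancel₀ hτ.ne'] at step2
  have hB := beta_val (p := p + 1) (r := 1 - ϑ) (by linarith) (by linarith)
  have step3 : ∫ s in (0:ℝ)..τ, (τ⁻¹ * s) ^ ((p + 1) - 1) * (1 - τ⁻¹ * s) ^ ((1 - ϑ) - 1)
      = τ * (Real.Gamma (p + 1) * Real.Gamma (1 - ϑ) / Real.Gamma (p + 1 + (1 - ϑ))) := by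
    rw [← hB, ← step2]
    simp [smul_eq_mul, ← mul_assoc, mul_inv_cancel₀ hτ.ne']
  rw [step3, show p + 1 - ϑ = (p - ϑ) + 1 by ring, Real.rpow_add_one hτ.ne']
  ring


/-- Lemma 3.6 (variance part), Weibull rate `Λ(t) = (t/b)^a`: with
`q = 1/Γ(1+ν)` and `D = ν q² B(ν, 1+ν)` (Euler Beta function), the fractional
integral of order `1−ϑ` of the variance
`v(s) = q(s/b)^(aν)(1 − q(s/b)^(aν)) + 2D(s/b)^(2aν)` has derivative
`q b^(−aν) Γ(1+aν)/Γ(1−ϑ+aν) · t^(aν−ϑ) + (2D − q²) b^(−2aν) Γ(1+2aν)/Γ(1−ϑ+2aν) · t^(2aν−ϑ)`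
at `t > 0`. -/
theorem stmt_7 (ϑ ν a b : ℝ) (hϑ : ϑ ∈ Set.Ioo (0 : ℝ) 1)
    (hν : ν ∈ Set.Ioc (0 : ℝ) 1) (ha : 0 < a) (hb : 0 < b) (t : ℝ) (ht : 0 < t)
    (q D : ℝ) (hq : q = 1 / Real.Gamma (1 + ν))
    (hD : D = ν * q ^ 2 * ∫ x in (0 : ℝ)..1, x ^ (ν - 1) * (1 - x) ^ ((1 + ν) - 1)) :
    HasDerivAt
      (fun τ : ℝ => (1 / Real.Gamma (1 - ϑ)) *
        ∫ s in (0 : ℝ)..τ, (τ - s) ^ (-ϑ) *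
          (q * (s / b) ^ (a * ν) * (1 - q * (s / b) ^ (a * ν))
            + 2 * D * (s / b) ^ (2 * a * ν)))
      (q * b ^ (-(a * ν)) * Real.Gamma (1 + a * ν) / Real.Gamma (1 - ϑ + a * ν)
          * t ^ (a * ν - ϑ)
        + (2 * D - q ^ 2) * b ^ (-(2 * a * ν))
          * (Real.Gamma (1 + 2 * a * ν) / Real.Gamma (1 - ϑ + 2 * a * ν))
          * t ^ (2 * a * ν - ϑ)) t := by

  obtain ⟨hϑ0, hϑ1⟩ := hϑ
  obtain ⟨hν0, hν1⟩ := hν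
  have h1 : 0 < a * ν := by positivity
  have h2 : 0 < 2 * a * ν := by positivity
  have hΓ : Real.Gamma (1 - ϑ) ≠ 0 := (Real.Gamma_pos_of_pos (by linarith)).ne'
  set C₁ := (1 / Real.Gamma (1 - ϑ)) * (q * b ^ (-(a * ν)) *
      (Real.Gamma (a * ν + 1) * Real.Gamma (1 - ϑ) / Real.Gamma (a * ν + 1 + (1 - ϑ)))) with hC₁
  set C₂ := (1 / Real.Gamma (1 - ϑ)) * ((2 * D - q ^ 2) * b ^ (-(2 * a * ν)) *
      (Real.Gamma (2 * a * ν + 1) * Real.Gamma (1 - ϑ) / Real.Gamma (2 * a * ν + 1 + (1 - ϑ))))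
    with hC₂
  have hclosed : ∀ τ ∈ Set.Ioi (0:ℝ),
      (1 / Real.Gamma (1 - ϑ)) * ∫ s in (0:ℝ)..τ, (τ - s) ^ (-ϑ) *
          (q * (s / b) ^ (a * ν) * (1 - q * (s / b) ^ (a * ν)) + 2 * D * (s / b) ^ (2 * a * ν))
        = C₁ * τ ^ (a * ν + 1 - ϑ) + C₂ * τ ^ (2 * a * ν + 1 - ϑ) := by
    intro τ hτ
    rw [Set.mem_Ioi] at hτ
    have hsplit : ∫ s in (0:ℝ)..τ, (τ - s) ^ (-ϑ) *
          (q * (s / b) ^ (a * ν) * (1 - q * (s / b) ^ (a * ν)) + 2 * D * (s / b) ^ (2 * a * ν))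
        = ∫ s in (0:ℝ)..τ, (q * b ^ (-(a * ν)) * ((τ - s) ^ (-ϑ) * s ^ (a * ν))
            + (2 * D - q ^ 2) * b ^ (-(2 * a * ν)) * ((τ - s) ^ (-ϑ) * s ^ (2 * a * ν))) := by
      apply intervalIntegral.integral_congr
      intro s hs
      rw [Set.uIcc_of_le hτ.le] at hs
      rcases eq_or_lt_of_le hs.1 with h0 | h0
      · rw [← h0]
        simp [Real.zero_rpow h1.ne', Real.zero_rpow h2.ne']
      · have hX : (s / b) ^ (a * ν) = s ^ (a * ν) * b ^ (-(a * ν)) := by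
          rw [Real.div_rpow h0.le hb.le, Real.rpow_neg hb.le, div_eq_mul_inv]
        have hY : (s / b) ^ (2 * a * ν) = s ^ (2 * a * ν) * b ^ (-(2 * a * ν)) := by
          rw [Real.div_rpow h0.le hb.le, Real.rpow_neg hb.le, div_eq_mul_inv]
        have hsq : (s / b) ^ (a * ν) * (s / b) ^ (a * ν) = (s / b) ^ (2 * a * ν) := by
          rw [← Real.rpow_add (by positivity)]; ring_nf
        have expand : q * (s / b) ^ (a * ν) * (1 - q * (s / b) ^ (a * ν))
              + 2 * D * (s / b) ^ (2 * a * ν)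
            = q * (s / b) ^ (a * ν) + (2 * D - q ^ 2) * (s / b) ^ (2 * a * ν) := by
          rw [← hsq]; ring
        simp only []
        rw [expand, hX, hY]; ring
    rw [hsplit, intervalIntegral.integral_add
        ((key_intble hϑ1 h1 hτ).const_mul _) ((key_intble hϑ1 h2 hτ).const_mul _),
      intervalIntegral.integral_const_mul, intervalIntegral.integral_const_mul,
      key_val hϑ0 hϑ1 h1 hτ, key_val hϑ0 hϑ1 h2 hτ]
    ring
  have hd1 : HasDerivAt (fun τ : ℝ => C₁ * τ ^ (a * ν + 1 - ϑ))
      (C₁ * ((a * ν + 1 - ϑ) * t ^ (a * ν + 1 - ϑ - 1))) t :=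
    (Real.hasDerivAt_rpow_const (Or.inl ht.ne')).const_mul C₁
  have hd2 : HasDerivAt (fun τ : ℝ => C₂ * τ ^ (2 * a * ν + 1 - ϑ))
      (C₂ * ((2 * a * ν + 1 - ϑ) * t ^ (2 * a * ν + 1 - ϑ - 1))) t :=
    (Real.hasDerivAt_rpow_const (Or.inl ht.ne')).const_mul C₂
  have hder := hd1.add hd2
  have heq : (fun τ : ℝ => (1 / Real.Gamma (1 - ϑ)) *
        ∫ s in (0:ℝ)..τ, (τ - s) ^ (-ϑ) *
          (q * (s / b) ^ (a * ν) * (1 - q * (s / b) ^ (a * ν))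
            + 2 * D * (s / b) ^ (2 * a * ν)))
      =ᶠ[nhds t] (fun τ : ℝ => C₁ * τ ^ (a * ν + 1 - ϑ) + C₂ * τ ^ (2 * a * ν + 1 - ϑ)) := by
    filter_upwards [isOpen_Ioi.mem_nhds (Set.mem_Ioi.mpr ht)] with τ hτ using hclosed τ hτ
  have hF := hder.congr_of_eventuallyEq heq
  refine hF.congr_deriv ?_
  have e1 : a * ν + 1 - ϑ - 1 = a * ν - ϑ := by ring
  have e2 : 2 * a * ν + 1 - ϑ - 1 = 2 * a * ν - ϑ := by ring
  have g1 : Real.Gamma (a * ν + 1 + (1 - ϑ)) = (1 - ϑ + a * ν) * Real.Gamma (1 - ϑ + a * ν) := by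
    rw [show a * ν + 1 + (1 - ϑ) = (1 - ϑ + a * ν) + 1 by ring,
      Real.Gamma_add_one (by linarith : (1 - ϑ + a * ν) ≠ 0)]
  have g2 : Real.Gamma (2 * a * ν + 1 + (1 - ϑ))
      = (1 - ϑ + 2 * a * ν) * Real.Gamma (1 - ϑ + 2 * a * ν) := by
    rw [show 2 * a * ν + 1 + (1 - ϑ) = (1 - ϑ + 2 * a * ν) + 1 by ring,
      Real.Gamma_add_one (by linarith : (1 - ϑ + 2 * a * ν) ≠ 0)]
  have n1 : Real.Gamma (1 - ϑ + a * ν) ≠ 0 := (Real.Gamma_pos_of_pos (by linarith)).ne'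
  have n2 : Real.Gamma (1 - ϑ + 2 * a * ν) ≠ 0 := (Real.Gamma_pos_of_pos (by linarith)).ne'
  have m1 : (1 - ϑ + a * ν) ≠ 0 := by linarith
  have m2 : (1 - ϑ + 2 * a * ν) ≠ 0 := by linarith
  rw [hC₁, hC₂, e1, e2, g1, g2, show (1:ℝ) + a * ν = a * ν + 1 by ring,
    show (1:ℝ) + 2 * a * ν = 2 * a * ν + 1 by ring]
  field_simp
  ring
end

section
/- Let ϑ ∈ (0,1), a > 0, b > 0 and t > 0. Then the function F(t) = (1/Γ(1−ϑ)) · ∫₀ᵗ (t−s)^{−ϑ} · (a/b)(e^{bs} − 1) ds has derivative at t equal to a b^{ϑ−1} e^{bt} · [ 1 + (ϑ/Γ(1−ϑ)) · ∫_{bt}^∞ u^{−ϑ−1} e^{−u} du ] − a t^{−ϑ} / (b Γ(1−ϑ)). -/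
open Real MeasureTheory Set

lemma intOn0 (ϑ : ℝ) (hϑ0 : 0 < ϑ) (hϑ1 : ϑ < 1) :
    IntegrableOn (fun v : ℝ => v ^ (-ϑ) * Real.exp (-v)) (Set.Ioi 0) := by
  have h := Real.GammaIntegral_convergent (show (0:ℝ) < 1 - ϑ by linarith)
  refine h.congr_fun (fun v hv => ?_) measurableSet_Ioi
  rw [show (1 - ϑ - 1) = -ϑ by ring, mul_comm]

lemma intOnA (ϑ : ℝ) (hϑ0 : 0 < ϑ) (x : ℝ) (hx : 0 < x) :
    IntegrableOn (fun v : ℝ => v ^ (-ϑ - 1) * Real.exp (-v)) (Set.Ioi x) := by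
  have hexp : IntegrableOn (fun v : ℝ => x ^ (-ϑ - 1) * Real.exp (-v)) (Set.Ioi x) := by
    have := (exp_neg_integrableOn_Ioi x (show (0:ℝ) < 1 by norm_num))
    refine ((this.congr_fun (fun v _ => by norm_num) measurableSet_Ioi).const_mul _)
  refine hexp.mono' ?_ ?_
  · refine (ContinuousOn.aestronglyMeasurable ?_ measurableSet_Ioi)
    refine ContinuousOn.mul ?_ (Real.continuous_exp.comp continuous_neg).continuousOn
    intro v hv
    exact ((Real.continuousAt_rpow_const v _ (Or.inl (ne_of_gt (lt_trans hx hv)))).continuousWithinAt)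
  · filter_upwards [MeasureTheory.ae_restrict_mem measurableSet_Ioi] with v hv
    have hv0 : 0 < v := lt_trans hx hv
    rw [Real.norm_eq_abs, abs_of_nonneg (mul_nonneg (Real.rpow_nonneg hv0.le _) (Real.exp_pos _).le)]
    exact mul_le_mul_of_nonneg_right
      (Real.rpow_le_rpow_of_nonpos hx (le_of_lt hv) (by linarith)) (Real.exp_pos _).le

lemma byparts (ϑ : ℝ) (hϑ0 : 0 < ϑ) (hϑ1 : ϑ < 1) (x : ℝ) (hx : 0 < x) :
    ∫ v in Set.Ioi x, v ^ (-ϑ) * Real.exp (-v)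
      = x ^ (-ϑ) * Real.exp (-x) - ϑ * ∫ v in Set.Ioi x, v ^ (-ϑ - 1) * Real.exp (-v) := by
  have hIb : IntegrableOn (fun v : ℝ => v ^ (-ϑ) * Real.exp (-v)) (Set.Ioi x) :=
    (intOn0 ϑ hϑ0 hϑ1).mono_set (Set.Ioi_subset_Ioi hx.le)
  have hIa := intOnA ϑ hϑ0 x hx
  set f : ℝ → ℝ := fun v => v ^ (-ϑ) * Real.exp (-v) with hf
  set f' : ℝ → ℝ := fun v => (-ϑ) * (v ^ (-ϑ - 1) * Real.exp (-v)) + (-1) * (v ^ (-ϑ) * Real.exp (-v)) with hf'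
  have hderiv : ∀ v ∈ Set.Ioi x, HasDerivAt f (f' v) v := by
    intro v hv
    have hv0 : (0:ℝ) < v := lt_trans hx hv
    have h1 : HasDerivAt (fun v : ℝ => v ^ (-ϑ)) (-ϑ * v ^ (-ϑ - 1)) v :=
      Real.hasDerivAt_rpow_const (Or.inl hv0.ne')
    have h2 : HasDerivAt (fun v : ℝ => Real.exp (-v)) (-Real.exp (-v)) v := by
      simpa using ((hasDerivAt_id v).neg).exp
    have : HasDerivAt f _ v := h1.mul h2
    convert this using 1
    show (-ϑ) * (v ^ (-ϑ - 1) * Real.exp (-v)) + (-1) * (v ^ (-ϑ) * Real.exp (-v)) = _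
    ring
  have hint : IntegrableOn f' (Set.Ioi x) := (hIa.const_mul _).add (hIb.const_mul _)
  have htend : Filter.Tendsto f Filter.atTop (nhds 0) := by
    have := (tendsto_rpow_neg_atTop hϑ0).mul Real.tendsto_exp_neg_atTop_nhds_zero
    simpa using this
  have key := MeasureTheory.integral_Ioi_of_hasDerivAt_of_tendsto
    (f := f) (f' := f') (a := x) (m := 0) ?_ hderiv hint htend
  · have hsplit : ∫ v in Set.Ioi x, f' v
        = (-ϑ) * (∫ v in Set.Ioi x, v ^ (-ϑ - 1) * Real.exp (-v))
          + (-1) * ∫ v in Set.Ioi x, v ^ (-ϑ) * Real.exp (-v) := by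
      rw [MeasureTheory.integral_add (hIa.const_mul _) (hIb.const_mul _),
        MeasureTheory.integral_const_mul, MeasureTheory.integral_const_mul]
    rw [hsplit] at key
    simp only [hf] at key ⊢
    linarith [key]
  · have hv0 : (0:ℝ) < x := hx
    exact ((Real.continuousAt_rpow_const x (-ϑ) (Or.inl hx.ne')).mul
      (Real.continuous_exp.comp continuous_neg).continuousAt).continuousWithinAt


/-- Lemma 3.7, Gompertz rate `Λ(t) = (a/b)(e^(bt) − 1)`: the fractional integral
of order `1−ϑ` of `s ↦ (a/b)(e^(bs) − 1)` has derivative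
`a b^(ϑ−1) e^(bt) [1 + (ϑ/Γ(1−ϑ)) Γ(−ϑ, bt)] − a t^(−ϑ)/(b Γ(1−ϑ))` at `t > 0`,
where `Γ(−ϑ, bt) = ∫_{bt}^∞ u^(−ϑ−1) e^(−u) du`. -/
theorem stmt_8 (ϑ a b : ℝ) (hϑ : ϑ ∈ Set.Ioo (0 : ℝ) 1) (ha : 0 < a) (hb : 0 < b)
    (t : ℝ) (ht : 0 < t) :
    HasDerivAt
      (fun τ : ℝ => (1 / Real.Gamma (1 - ϑ)) *
        ∫ s in (0 : ℝ)..τ, (τ - s) ^ (-ϑ) * ((a / b) * (Real.exp (b * s) - 1)))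
      (a * b ^ (ϑ - 1) * Real.exp (b * t)
          * (1 + ϑ / Real.Gamma (1 - ϑ)
              * ∫ u in Set.Ioi (b * t), u ^ (-ϑ - 1) * Real.exp (-u))
        - a * t ^ (-ϑ) / (b * Real.Gamma (1 - ϑ))) t := by
  obtain ⟨hϑ0, hϑ1⟩ := hϑ
  have hΓ : 0 < Real.Gamma (1 - ϑ) := Real.Gamma_pos_of_pos (by linarith)
  set Γ := Real.Gamma (1 - ϑ) with hΓdef
  set G : ℝ → ℝ := fun τ => ∫ u in (0:ℝ)..τ, u ^ (-ϑ) * Real.exp (-(b*u)) with hGdef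
  -- Step 1: eventual equality on Ioi 0
  have key : ∀ τ : ℝ, 0 < τ →
      (1 / Γ) * (∫ s in (0:ℝ)..τ, (τ - s) ^ (-ϑ) * ((a / b) * (Real.exp (b * s) - 1)))
        = (a / (b * Γ)) * (Real.exp (b * τ) * G τ - τ ^ (1 - ϑ) / (1 - ϑ)) := by
    intro τ hτ
    have I1 : IntervalIntegrable (fun u : ℝ => u ^ (-ϑ)) volume 0 τ :=
      intervalIntegral.intervalIntegrable_rpow' (by linarith)
    have I2 : IntervalIntegrable (fun u : ℝ => u ^ (-ϑ) * Real.exp (-(b*u))) volume 0 τ :=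
      I1.mul_continuousOn (Continuous.continuousOn (by continuity))
    have h1 : (∫ s in (0:ℝ)..τ, (τ - s) ^ (-ϑ) * ((a / b) * (Real.exp (b * s) - 1)))
        = ∫ s in (0:ℝ)..τ,
            (fun u : ℝ => u ^ (-ϑ) * ((a / b) * (Real.exp (b*τ) * Real.exp (-(b*u)) - 1))) (τ - s) := by
      refine intervalIntegral.integral_congr fun s hs => ?_
      simp only
      have he : Real.exp (b*τ) * Real.exp (-(b*(τ-s))) = Real.exp (b*s) := by
        rw [← Real.exp_add]; congr 1; ring
      rw [he]
    have h2 : (∫ s in (0:ℝ)..τ,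
            (fun u : ℝ => u ^ (-ϑ) * ((a / b) * (Real.exp (b*τ) * Real.exp (-(b*u)) - 1))) (τ - s))
        = ∫ u in (0:ℝ)..τ, u ^ (-ϑ) * ((a / b) * (Real.exp (b*τ) * Real.exp (-(b*u)) - 1)) := by
      rw [intervalIntegral.integral_comp_sub_left
        (fun u : ℝ => u ^ (-ϑ) * ((a / b) * (Real.exp (b*τ) * Real.exp (-(b*u)) - 1))) τ]
      simp
    have h3 : (∫ u in (0:ℝ)..τ, u ^ (-ϑ) * ((a / b) * (Real.exp (b*τ) * Real.exp (-(b*u)) - 1)))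
        = ∫ u in (0:ℝ)..τ, ((a / b * Real.exp (b*τ)) * (u ^ (-ϑ) * Real.exp (-(b*u)))
            - (a / b) * u ^ (-ϑ)) := by
      refine intervalIntegral.integral_congr fun u hu => ?_
      ring
    have h4 : (∫ u in (0:ℝ)..τ, ((a / b * Real.exp (b*τ)) * (u ^ (-ϑ) * Real.exp (-(b*u)))
            - (a / b) * u ^ (-ϑ)))
        = (a / b * Real.exp (b*τ)) * G τ - (a / b) * (τ ^ (1-ϑ) / (1-ϑ)) := by
      rw [intervalIntegral.integral_sub (I2.const_mul _) (I1.const_mul _),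
        intervalIntegral.integral_const_mul, intervalIntegral.integral_const_mul]
      have : (∫ u in (0:ℝ)..τ, u ^ (-ϑ)) = τ ^ (1-ϑ) / (1-ϑ) := by
        rw [integral_rpow (Or.inl (by linarith))]
        rw [Real.zero_rpow (by intro h; rw [show -ϑ + 1 = 1 - ϑ by ring] at h; nlinarith [h]
          : -ϑ + 1 ≠ 0)]
        rw [show -ϑ + 1 = 1 - ϑ by ring]
        ring
      rw [this]
    rw [h1, h2, h3, h4]
    have h1ϑ : (1:ℝ) - ϑ ≠ 0 := by linarith
    field_simp
  -- Step 2: derivative of RHS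
  have hfcont : ∀ u : ℝ, 0 < u → ContinuousAt (fun u : ℝ => u ^ (-ϑ) * Real.exp (-(b*u))) u := by
    intro u hu
    exact (Real.continuousAt_rpow_const u (-ϑ) (Or.inl hu.ne')).mul (by fun_prop)
  have hGd : HasDerivAt G (t ^ (-ϑ) * Real.exp (-(b*t))) t := by
    refine intervalIntegral.integral_hasDerivAt_right
      ((intervalIntegral.intervalIntegrable_rpow' (by linarith)).mul_continuousOn
        (Continuous.continuousOn (by continuity)))
      ?_ (hfcont t ht)
    exact ContinuousAt.stronglyMeasurableAtFilter isOpen_Ioi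
      (fun u hu => hfcont u hu) t ht
  have hE : HasDerivAt (fun τ : ℝ => Real.exp (b*τ)) (Real.exp (b*t) * b) t := by
    simpa using (((hasDerivAt_id t).const_mul b).exp)
  have hpow : HasDerivAt (fun τ : ℝ => τ ^ (1-ϑ)) ((1-ϑ) * t ^ (-ϑ)) t := by
    have := Real.hasDerivAt_rpow_const (p := 1-ϑ) (Or.inl ht.ne')
    rwa [show 1 - ϑ - 1 = -ϑ by ring] at this
  have hD : HasDerivAt (fun τ : ℝ => (a / (b * Γ)) * (Real.exp (b * τ) * G τ - τ ^ (1 - ϑ) / (1 - ϑ)))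
      ((a / (b * Γ)) * ((Real.exp (b*t) * b) * G t + Real.exp (b*t) * (t ^ (-ϑ) * Real.exp (-(b*t)))
        - ((1-ϑ) * t ^ (-ϑ)) / (1-ϑ))) t :=
    ((hE.mul hGd).sub (hpow.div_const _)).const_mul _
  -- Step 3: compute G t
  have hbt : 0 < b * t := mul_pos hb ht
  set J : ℝ := ∫ u in Set.Ioi (b * t), u ^ (-ϑ - 1) * Real.exp (-u) with hJdef
  have hGt : G t = b ^ (ϑ - 1) *
      (Γ - (b*t) ^ (-ϑ) * Real.exp (-(b*t)) + ϑ * J) := by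
    set I : ℝ := ∫ v in (0:ℝ)..(b*t), v ^ (-ϑ) * Real.exp (-v) with hIdef
    have h0 : (∫ u in (0:ℝ)..t, (fun v : ℝ => v ^ (-ϑ) * Real.exp (-v)) (b * u))
        = b ^ (-ϑ) * G t := by
      rw [hGdef]
      rw [← intervalIntegral.integral_const_mul]
      refine intervalIntegral.integral_congr fun u hu => ?_
      have hu0 : 0 ≤ u := by
        rw [Set.uIcc_of_le ht.le] at hu; exact hu.1
      simp only
      rw [Real.mul_rpow hb.le hu0]
      ring
    have hs1 : b • (∫ u in (0:ℝ)..t, (fun v : ℝ => v ^ (-ϑ) * Real.exp (-v)) (b * u))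
        = ∫ v in (b*0)..(b*t), v ^ (-ϑ) * Real.exp (-v) :=
      intervalIntegral.smul_integral_comp_mul_left (fun v : ℝ => v ^ (-ϑ) * Real.exp (-v)) b
    rw [h0, smul_eq_mul, mul_zero] at hs1
    -- hs1 : b * (b ^ (-ϑ) * G t) = I
    have hIval : I = Γ - ((b*t) ^ (-ϑ) * Real.exp (-(b*t)) - ϑ * J) := by
      have hGam : Γ = ∫ v in Set.Ioi (0:ℝ), v ^ (-ϑ) * Real.exp (-v) := by
        rw [hΓdef, Real.Gamma_eq_integral (show (0:ℝ) < 1 - ϑ by linarith)]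
        refine MeasureTheory.setIntegral_congr_fun measurableSet_Ioi fun v hv => ?_
        rw [show (1 - ϑ - 1) = -ϑ by ring, mul_comm]
      have hsplit := MeasureTheory.setIntegral_union (μ := volume)
        (f := fun v : ℝ => v ^ (-ϑ) * Real.exp (-v))
        (Set.Ioc_disjoint_Ioi le_rfl) measurableSet_Ioi
        ((intOn0 ϑ hϑ0 hϑ1).mono_set Set.Ioc_subset_Ioi_self)
        ((intOn0 ϑ hϑ0 hϑ1).mono_set (Set.Ioi_subset_Ioi hbt.le))
      rw [Set.Ioc_union_Ioi_eq_Ioi hbt.le] at hsplit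
      have hI2 : I = ∫ v in Set.Ioc (0:ℝ) (b*t), v ^ (-ϑ) * Real.exp (-v) :=
        intervalIntegral.integral_of_le hbt.le
      have hbp := byparts ϑ hϑ0 hϑ1 (b*t) hbt
      rw [hI2, hGam, hsplit, hbp, ← hJdef]
      ring
    have hbb : b ^ (ϑ - 1) * (b * b ^ (-ϑ)) = 1 := by
      rw [show b * b ^ (-ϑ) = b ^ (1 - ϑ) by
        rw [show (1:ℝ) - ϑ = 1 + -ϑ by ring, Real.rpow_add hb, Real.rpow_one],
        ← Real.rpow_add hb]
      norm_num
    calc G t = (b ^ (ϑ - 1) * (b * b ^ (-ϑ))) * G t := by rw [hbb, one_mul]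
      _ = b ^ (ϑ - 1) * I := by rw [hIdef, ← hs1]; ring
      _ = _ := by rw [hIval]; ring
  -- Final assembly
  have hev : (fun τ : ℝ => (1 / Γ) *
        ∫ s in (0 : ℝ)..τ, (τ - s) ^ (-ϑ) * ((a / b) * (Real.exp (b * s) - 1)))
      =ᶠ[nhds t] (fun τ : ℝ => (a / (b * Γ)) * (Real.exp (b * τ) * G τ - τ ^ (1 - ϑ) / (1 - ϑ))) :=
    Filter.eventuallyEq_of_mem (Ioi_mem_nhds ht) fun τ hτ => key τ hτ
  have final := hD.congr_of_eventuallyEq hev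
  have hval : (a / (b * Γ)) * ((Real.exp (b*t) * b) * G t
        + Real.exp (b*t) * (t ^ (-ϑ) * Real.exp (-(b*t))) - ((1-ϑ) * t ^ (-ϑ)) / (1-ϑ))
      = a * b ^ (ϑ - 1) * Real.exp (b * t) * (1 + ϑ / Γ * J) - a * t ^ (-ϑ) / (b * Γ) := by
    rw [hGt, Real.mul_rpow hb.le ht.le]
    have h1 : b ^ (ϑ - 1) = b ^ ϑ * b⁻¹ := by
      rw [show ϑ - 1 = ϑ + -1 by ring, Real.rpow_add hb, Real.rpow_neg_one]
    have h2 : b ^ (-ϑ) = (b ^ ϑ)⁻¹ := Real.rpow_neg hb.le ϑ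
    have h3 : Real.exp (-(b*t)) = (Real.exp (b*t))⁻¹ := Real.exp_neg _
    rw [h1, h2, h3]
    have hbϑ : (0:ℝ) < b ^ ϑ := Real.rpow_pos_of_pos hb ϑ
    have h1ϑ : (1:ℝ) - ϑ ≠ 0 := by linarith
    field_simp
    ring
  rwa [hval] at final
end
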